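/- Let d ≥ 2 be an integer and α ∈ (0,2). Let Π = {y ∈ ℝ^d : y₁ ≤ 1}, let B₁ be the open unit ball centered at the origin, and set P = Π \ B₁. Then there exists a constant C > 0 such that for every x = (r,0,…,0) with r ∈ (1/2, 2) and r ≠ 1: ∫_P |x−y|^{−(d+α)} dy ≤ C if 0 < α < 1; ∫_P |x−y|^{−(d+α)} dy ≤ C(1 + |log|1−r||) if α = 1; and ∫_P |x−y|^{−(d+α)} dy ≤ C|1−r|^{1−α} if 1 < α < 2. -/

import Mathlib

set_option maxHeartbeats 1600000

open MeasureTheory Real Set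

lemma normsq {n : ℕ} (z : EuclideanSpace ℝ (Fin n)) : ‖z‖^2 = ∑ j, (z j)^2 := by
  rw [EuclideanSpace.norm_eq, Real.sq_sqrt (by positivity)]
  exact Finset.sum_congr rfl fun j _ => by rw [Real.norm_eq_abs, sq_abs]

lemma coord_le {n : ℕ} (z : EuclideanSpace ℝ (Fin n)) (i : Fin n) : |z i| ≤ ‖z‖ := by
  rw [← Real.sqrt_sq_eq_abs, ← Real.sqrt_sq (norm_nonneg z), normsq]
  apply Real.sqrt_le_sqrt
  exact Finset.single_le_sum (f := fun j => (z j)^2) (fun j _ => by positivity) (Finset.mem_univ i)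

lemma vol_box (n : ℕ) (a b : Fin n → ℝ) :
    volume {y : EuclideanSpace ℝ (Fin n) | ∀ i, y i ∈ Set.Icc (a i) (b i)}
      = ∏ i, ENNReal.ofReal (b i - a i) := by
  have h := (EuclideanSpace.volume_preserving_symm_measurableEquiv_toLp (Fin n)).measure_preimage
    (s := Set.univ.pi fun i => Set.Icc (a i) (b i))
    (MeasurableSet.univ_pi fun i => measurableSet_Icc).nullMeasurableSet
  have hs : (MeasurableEquiv.toLp 2 (Fin n → ℝ)).symm ⁻¹' (Set.univ.pi fun i => Set.Icc (a i) (b i))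
      = {y : EuclideanSpace ℝ (Fin n) | ∀ i, y i ∈ Set.Icc (a i) (b i)} := by
    ext y
    simp only [Set.mem_preimage, Set.mem_pi, Set.mem_univ, forall_true_left, Set.mem_setOf_eq]
    exact Iff.rfl
  rw [hs] at h
  rw [h, volume_pi_pi]
  simp [Real.volume_Icc]

lemma vol_ball_le {n : ℕ} (x : EuclideanSpace ℝ (Fin n)) (ρ : ℝ) :
    volume (Metric.ball x ρ) ≤ ENNReal.ofReal ((2*ρ)^n) := by
  have hsub : Metric.ball x ρ ⊆ {y : EuclideanSpace ℝ (Fin n) | ∀ i, y i ∈ Set.Icc (x i - ρ) (x i + ρ)} := by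
    intro y hyb i
    have hyd : ‖y - x‖ < ρ := by simpa [Metric.mem_ball, dist_eq_norm] using hyb
    have h2 := (coord_le (y - x) i).trans_lt hyd
    have hco : (y - x) i = y i - x i := by simp
    rw [hco, abs_lt] at h2
    constructor <;> linarith [h2.1, h2.2]
  calc volume (Metric.ball x ρ)
      ≤ volume {y : EuclideanSpace ℝ (Fin n) | ∀ i, y i ∈ Set.Icc (x i - ρ) (x i + ρ)} :=
        measure_mono hsub
    _ = ∏ i : Fin n, ENNReal.ofReal (x i + ρ - (x i - ρ)) := vol_box _ _ _
    _ = ∏ _i : Fin n, ENNReal.ofReal (2*ρ) :=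
        Finset.prod_congr rfl fun i _ => by rw [show x i + ρ - (x i - ρ) = 2*ρ by ring]
    _ ≤ ENNReal.ofReal ((2*ρ)^n) := by
        rcases le_or_gt ρ 0 with h | h
        · have h20 : ENNReal.ofReal (2*ρ) = 0 := ENNReal.ofReal_eq_zero.mpr (by linarith)
          rcases Nat.eq_zero_or_pos n with rfl | hn
          · simp
          · rw [Finset.prod_const, Finset.card_univ, Fintype.card_fin, h20, zero_pow hn.ne']
            exact zero_le
        · rw [Finset.prod_const, Finset.card_univ, Fintype.card_fin,
            ← ENNReal.ofReal_pow (by positivity)]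

section geom
variable {k : ℕ} {r : ℝ}

local notation "E" => EuclideanSpace ℝ (Fin (k+2))

lemma dist_bound (hr : r ∈ Set.Ioo (1/2:ℝ) 2)
    (y : E) (hy1 : y 0 ≤ 1) (hy2 : (1:ℝ) ≤ ‖y‖) :
    |1 - r| ≤ ‖(r • EuclideanSpace.single (0 : Fin (k+2)) (1:ℝ)) - y‖ := by
  set x : E := r • EuclideanSpace.single (0 : Fin (k+2)) (1:ℝ) with hx
  have hxn : ‖x‖ = r := by
    rw [hx, norm_smul, EuclideanSpace.norm_single]
    simp [abs_of_pos (by linarith [hr.1] : (0:ℝ) < r)]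
  have hx0 : x 0 = r := by
    simp [hx, EuclideanSpace.single_apply]
  rcases le_or_gt r 1 with h | h
  · rw [abs_of_nonneg (by linarith)]
    calc (1:ℝ) - r ≤ ‖y‖ - ‖x‖ := by rw [hxn]; linarith
    _ ≤ ‖y - x‖ := norm_sub_norm_le y x
    _ = ‖x - y‖ := norm_sub_rev y x
  · rw [abs_of_nonpos (by linarith), neg_sub]
    calc r - 1 ≤ r - y 0 := by linarith
    _ ≤ |(x - y) 0| := by
        have : (x - y) 0 = r - y 0 := by simp [hx0]
        rw [this]; exact le_abs_self _
    _ ≤ ‖x - y‖ := coord_le _ _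

lemma vol_bound (hr : r ∈ Set.Ioo (1/2:ℝ) 2) (ρ : ℝ) (hρ : 0 < ρ) :
    volume (({y : E | y 0 ≤ 1} \ Metric.ball 0 1)
        ∩ Metric.ball (r • EuclideanSpace.single (0 : Fin (k+2)) (1:ℝ)) ρ)
      ≤ ENNReal.ofReal (2^(k+3) * ρ^(k+3)) := by
  set x : E := r • EuclideanSpace.single (0 : Fin (k+2)) (1:ℝ) with hxdef
  have hx0 : x 0 = r := by simp [hxdef, EuclideanSpace.single_apply]
  have hxs : ∀ j : Fin (k+1), x j.succ = 0 := by
    intro j; simp [hxdef, EuclideanSpace.single_apply, Fin.succ_ne_zero]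
  rcases le_or_gt ρ (1/2) with hle | hgt
  · -- small ρ: thin lens box
    set a : Fin (k+2) → ℝ := fun j => if j = 0 then 1 - ρ^2 else -ρ with ha
    set b : Fin (k+2) → ℝ := fun j => if j = 0 then 1 else ρ with hb
    have hsub : ({y : E | y 0 ≤ 1} \ Metric.ball 0 1) ∩ Metric.ball x ρ
        ⊆ {y : E | ∀ i, y i ∈ Set.Icc (a i) (b i)} := by
      rintro y ⟨⟨hy1, hy2⟩, hyb⟩
      have hy2' : (1:ℝ) ≤ ‖y‖ := by
        simpa [Metric.mem_ball, dist_eq_norm] using hy2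
      have hyd : ‖y - x‖ < ρ := by
        simpa [Metric.mem_ball, dist_eq_norm] using hyb
      have hyd2 : ‖y - x‖^2 < ρ^2 := by
        apply pow_lt_pow_left₀ hyd (norm_nonneg _)
        norm_num
      have hsplit : ‖y - x‖^2 = (y 0 - r)^2 + ∑ j : Fin (k+1), (y j.succ)^2 := by
        rw [normsq, Fin.sum_univ_succ]
        congr 1
        · simp [hx0]
        · exact Finset.sum_congr rfl fun j _ => by simp [hxs j]
      have hysq : ‖y‖^2 = (y 0)^2 + ∑ j : Fin (k+1), (y j.succ)^2 := by
        rw [normsq, Fin.sum_univ_succ]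
      have hsum_nn : (0:ℝ) ≤ ∑ j : Fin (k+1), (y j.succ)^2 :=
        Finset.sum_nonneg fun j _ => sq_nonneg _
      have hs_lt : ∑ j : Fin (k+1), (y j.succ)^2 < ρ^2 := by nlinarith [sq_nonneg (y 0 - r)]
      have hy0r : (y 0 - r)^2 < ρ^2 := by nlinarith
      have hy0_pos : 0 ≤ y 0 := by nlinarith [hr.1]
      have hnorm1 : (1:ℝ) ≤ ‖y‖^2 := by nlinarith [norm_nonneg y]
      have hy0_lb : 1 - ρ^2 ≤ y 0 := by nlinarith
      intro i
      rcases eq_or_ne i 0 with rfl | hi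
      · simp only [ha, hb, if_pos rfl]
        exact ⟨hy0_lb, hy1⟩
      · obtain ⟨j, rfl⟩ := Fin.eq_succ_of_ne_zero hi
        have hj : (y j.succ)^2 ≤ ∑ j' : Fin (k+1), (y j'.succ)^2 :=
          Finset.single_le_sum (f := fun j' => (y j'.succ)^2)
            (fun j' _ => sq_nonneg _) (Finset.mem_univ j)
        have h1 : (y j.succ)^2 < ρ^2 := lt_of_le_of_lt hj hs_lt
        simp only [ha, hb, if_neg hi]
        constructor <;> nlinarith
    calc volume (({y : E | y 0 ≤ 1} \ Metric.ball 0 1) ∩ Metric.ball x ρ)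
        ≤ volume {y : E | ∀ i, y i ∈ Set.Icc (a i) (b i)} := measure_mono hsub
      _ = ∏ i, ENNReal.ofReal (b i - a i) := vol_box _ a b
      _ = ENNReal.ofReal (ρ^2) * ∏ j : Fin (k+1), ENNReal.ofReal (2*ρ) := by
          rw [Fin.prod_univ_succ]
          congr 1
          · simp [ha, hb]
          · exact Finset.prod_congr rfl fun j _ => by
              simp [ha, hb, Fin.succ_ne_zero]
              ring_nf
              rw [ENNReal.ofReal_mul hρ.le, ENNReal.ofReal_ofNat]
      _ = ENNReal.ofReal (ρ^2 * (2*ρ)^(k+1)) := by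
          rw [Finset.prod_const, Finset.card_univ, Fintype.card_fin,
            ← ENNReal.ofReal_pow (by positivity), ← ENNReal.ofReal_mul (by positivity)]
      _ ≤ ENNReal.ofReal (2^(k+3) * ρ^(k+3)) := by
          apply ENNReal.ofReal_le_ofReal
          rw [mul_pow]
          calc ρ^2 * (2^(k+1) * ρ^(k+1)) = 2^(k+1) * ρ^(k+3) := by ring
          _ ≤ 2^(k+3) * ρ^(k+3) := by
              apply mul_le_mul_of_nonneg_right _ (by positivity)
              apply pow_le_pow_right₀ (by norm_num) (by omega)
  · -- large ρ: plain ball bound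
    calc volume (({y : E | y 0 ≤ 1} \ Metric.ball 0 1) ∩ Metric.ball x ρ)
        ≤ volume (Metric.ball x ρ) := measure_mono Set.inter_subset_right
      _ ≤ ENNReal.ofReal ((2*ρ)^(k+2)) := vol_ball_le x ρ
      _ ≤ ENNReal.ofReal (2^(k+3) * ρ^(k+3)) := by
          apply ENNReal.ofReal_le_ofReal
          rw [mul_pow]
          have h1 : ρ^(k+2) ≤ 2 * ρ^(k+3) := by
            have : ρ^(k+3) = ρ^(k+2) * ρ := by ring
            nlinarith [pow_nonneg hρ.le (k+2)]
          calc 2^(k+2) * ρ^(k+2) ≤ 2^(k+2) * (2 * ρ^(k+3)) := by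
                apply mul_le_mul_of_nonneg_left h1 (by positivity)
          _ = 2^(k+3) * ρ^(k+3) := by ring

end geom

/-- Estimates on `∫_P |x-y|^{-(d+α)} dy` where `P = Π \ B₁`,
`Π = {y : y₁ ≤ 1}`, for `x = r e₁` near the unit sphere. -/
theorem halfspace_minus_ball_estimate (d : ℕ) (hd : 2 ≤ d) (α : ℝ) (hα : α ∈ Set.Ioo (0:ℝ) 2) :
    ∃ C : ℝ, 0 < C ∧
      ∀ r : ℝ, r ∈ Set.Ioo (1/2 : ℝ) 2 → r ≠ 1 →
        ∀ x : EuclideanSpace ℝ (Fin d),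
          x = r • EuclideanSpace.single (⟨0, by omega⟩ : Fin d) (1:ℝ) →
          ((α < 1 →
            (∫⁻ y in {y : EuclideanSpace ℝ (Fin d) | y (⟨0, by omega⟩ : Fin d) ≤ 1} \
                Metric.ball (0 : EuclideanSpace ℝ (Fin d)) 1,
              ENNReal.ofReal (‖x - y‖ ^ (-((d : ℝ) + α)))) ≤ ENNReal.ofReal C) ∧
          (α = 1 →
            (∫⁻ y in {y : EuclideanSpace ℝ (Fin d) | y (⟨0, by omega⟩ : Fin d) ≤ 1} \
                Metric.ball (0 : EuclideanSpace ℝ (Fin d)) 1,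
              ENNReal.ofReal (‖x - y‖ ^ (-((d : ℝ) + α)))) ≤
              ENNReal.ofReal (C * (1 + abs (Real.log (abs (1 - r)))))) ∧
          (1 < α →
            (∫⁻ y in {y : EuclideanSpace ℝ (Fin d) | y (⟨0, by omega⟩ : Fin d) ≤ 1} \
                Metric.ball (0 : EuclideanSpace ℝ (Fin d)) 1,
              ENNReal.ofReal (‖x - y‖ ^ (-((d : ℝ) + α)))) ≤
              ENNReal.ofReal (C * |1 - r| ^ (1 - α)))) := by
  obtain ⟨hα0, hα2⟩ := hα
  obtain ⟨k, rfl⟩ : ∃ k, d = k + 2 := ⟨d - 2, by omega⟩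
  set q : ℝ := ((k + 2 : ℕ) : ℝ) + α with hq_def
  have hkq : ((k:ℝ) + 2) < q := by rw [hq_def]; push_cast; linarith
  have hq0 : (0:ℝ) < q := by push_cast at hkq ⊢; linarith
  -- the exponents
  set e₁ : ℝ := -((k:ℝ)+2)/q with he₁
  set e₂ : ℝ := -((k:ℝ)+3)/q with he₂
  have he₁1 : -1 < e₁ := by
    rw [he₁, neg_div, neg_lt_neg_iff, div_lt_one hq0]; exact hkq
  have hq_ne : q ≠ 0 := ne_of_gt hq0
  have he₁a : e₁ + 1 = α / q := by
    rw [he₁, hq_def]; push_cast; field_simp; ring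
  have he₂a : e₂ + 1 = (α - 1) / q := by
    rw [he₂, hq_def]; push_cast; field_simp; ring
  -- the constant
  set V₁ : ℝ := 2^(k+2) * (q / α) with hV₁
  have hV₁pos : 0 < V₁ := by positivity
  set C : ℝ := V₁ + 2^(k+3) * q * (1 + 1 / |1 - α|) with hC
  have hCpos : 0 < C := by
    have h1 : (0:ℝ) ≤ 2^(k+3) * q * (1 + 1 / |1 - α|) := by
      apply mul_nonneg (mul_nonneg (by positivity) hq0.le)
      positivity
    rw [hC]; linarith
  refine ⟨C, hCpos, ?_⟩
  intro r hr hr1 x hx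
  have hi0 : (⟨0, by omega⟩ : Fin (k+2)) = 0 := by ext; simp
  rw [hi0] at hx
  subst hx
  simp only [hi0]
  set x : EuclideanSpace ℝ (Fin (k+2)) := r • EuclideanSpace.single (0 : Fin (k+2)) (1:ℝ)
    with hxdef
  set P : Set (EuclideanSpace ℝ (Fin (k+2))) :=
    {y | y 0 ≤ 1} \ Metric.ball 0 1 with hP_def
  set f : EuclideanSpace ℝ (Fin (k+2)) → ℝ := fun y => ‖x - y‖ ^ (-q) with hf_def
  have hf_meas : Measurable f := by
    rw [hf_def]; fun_prop
  have hev : Measurable fun y : EuclideanSpace ℝ (Fin (k+2)) => y 0 :=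
    (measurable_pi_apply (0 : Fin (k+2))).comp
      (MeasurableEquiv.toLp 2 (Fin (k+2) → ℝ)).symm.measurable
  have hP : MeasurableSet P :=
    (measurableSet_le hev measurable_const).diff Metric.isOpen_ball.measurableSet
  set δ : ℝ := |1 - r| with hδ_def
  have hδ0 : 0 < δ := abs_pos.mpr (sub_ne_zero_of_ne (Ne.symm hr1))
  have hδ1 : δ < 1 := abs_lt.mpr ⟨by linarith [hr.2], by linarith [hr.1]⟩
  set T : ℝ := δ ^ (-q) with hT_def
  have hT1 : 1 < T :=
    (Real.one_lt_rpow_iff_of_pos hδ0).mpr (Or.inr ⟨hδ1, by linarith⟩)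
  have hT0 : (0:ℝ) < T := lt_trans one_pos hT1
  have hdist : ∀ y ∈ P, δ ≤ ‖x - y‖ := by
    intro y hy
    have h2 := hy.2
    rw [Metric.mem_ball, dist_zero_right, not_lt] at h2
    exact dist_bound hr y hy.1 h2
  have hball : ∀ t : ℝ, 0 < t →
      {y : EuclideanSpace ℝ (Fin (k+2)) | t < f y} ⊆ Metric.ball x (t ^ (-1/q)) := by
    intro t ht y hy
    simp only [Set.mem_setOf_eq, hf_def] at hy
    set s : ℝ := ‖x - y‖ with hs_def
    have hsnn : 0 ≤ s := by rw [hs_def]; exact norm_nonneg _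
    have hs0 : 0 < s := by
      rcases eq_or_lt_of_le hsnn with h | h
      · exfalso
        rw [← h, Real.zero_rpow (by intro h'; rw [neg_eq_zero] at h'; linarith)] at hy
        linarith
      · exact h
    have h2 : (s ^ (-q)) ^ (-1/q) < t ^ (-1/q) :=
      Real.rpow_lt_rpow_of_neg ht hy (div_neg_of_neg_of_pos (by norm_num) hq0)
    have h3 : (s ^ (-q)) ^ (-1/q) = s := by
      rw [← Real.rpow_mul hs0.le, show (-q) * (-1/q) = 1 by field_simp, Real.rpow_one]
    rw [Metric.mem_ball, dist_eq_norm, ← norm_sub_rev]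
    rw [h3] at h2
    exact h2
  have hG1 : ∀ t ∈ Ioc (0:ℝ) 1,
      volume ({y : EuclideanSpace ℝ (Fin (k+2)) | t < f y} ∩ P)
        ≤ ENNReal.ofReal (2^(k+2) * t ^ e₁) := by
    intro t ht
    have hρ : (0:ℝ) < t ^ (-1/q) := Real.rpow_pos_of_pos ht.1 _
    calc volume ({y : EuclideanSpace ℝ (Fin (k+2)) | t < f y} ∩ P)
        ≤ volume (Metric.ball x (t ^ (-1/q))) :=
          measure_mono (Set.inter_subset_left.trans (hball t ht.1))
      _ ≤ ENNReal.ofReal ((2 * t ^ (-1/q))^(k+2)) := vol_ball_le _ _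
      _ = ENNReal.ofReal (2^(k+2) * t ^ e₁) := by
          congr 1
          rw [mul_pow]
          congr 1
          rw [← Real.rpow_natCast (t ^ (-1/q)) (k+2), ← Real.rpow_mul ht.1.le]
          congr 1
          rw [he₁]
          push_cast
          field_simp
  have hG2 : ∀ t : ℝ, 1 < t →
      volume ({y : EuclideanSpace ℝ (Fin (k+2)) | t < f y} ∩ P)
        ≤ ENNReal.ofReal (2^(k+3) * t ^ e₂) := by
    intro t ht
    have ht0 : (0:ℝ) < t := lt_trans one_pos ht
    have hρ : (0:ℝ) < t ^ (-1/q) := Real.rpow_pos_of_pos ht0 _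
    calc volume ({y : EuclideanSpace ℝ (Fin (k+2)) | t < f y} ∩ P)
        ≤ volume (P ∩ Metric.ball x (t ^ (-1/q))) := by
          apply measure_mono
          rw [Set.inter_comm]
          exact Set.inter_subset_inter_right _ (hball t ht0)
      _ ≤ ENNReal.ofReal (2^(k+3) * (t ^ (-1/q))^(k+3)) := vol_bound hr _ hρ
      _ = ENNReal.ofReal (2^(k+3) * t ^ e₂) := by
          congr 1
          congr 1
          rw [← Real.rpow_natCast (t ^ (-1/q)) (k+3), ← Real.rpow_mul ht0.le]
          congr 1
          rw [he₂]
          push_cast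
          field_simp
  have hG3 : ∀ t : ℝ, T ≤ t →
      volume ({y : EuclideanSpace ℝ (Fin (k+2)) | t < f y} ∩ P) = 0 := by
    intro t ht
    have hempty : {y : EuclideanSpace ℝ (Fin (k+2)) | t < f y} ∩ P = ∅ := by
      rw [Set.eq_empty_iff_forall_notMem]
      rintro y ⟨hyf, hyP⟩
      simp only [Set.mem_setOf_eq, hf_def] at hyf
      have h1 : ‖x - y‖ ^ (-q) ≤ δ ^ (-q) :=
        Real.rpow_le_rpow_of_nonpos hδ0 (hdist y hyP) (neg_nonpos.mpr hq0.le)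
      rw [← hT_def] at h1
      linarith
    rw [hempty, measure_empty]
  -- layer cake
  have hf_nn : 0 ≤ᵐ[volume.restrict P] f :=
    Filter.Eventually.of_forall fun y => Real.rpow_nonneg (norm_nonneg _) _
  have hlayer : ∫⁻ y in P, ENNReal.ofReal (f y)
      = ∫⁻ t in Ioi (0:ℝ), volume ({y : EuclideanSpace ℝ (Fin (k+2)) | t < f y} ∩ P) := by
    rw [lintegral_eq_lintegral_meas_lt (volume.restrict P) hf_nn hf_meas.aemeasurable]
    refine lintegral_congr fun t => ?_
    rw [Measure.restrict_apply (measurableSet_lt measurable_const hf_meas)]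
  have hsplit : ∫⁻ t in Ioi (0:ℝ), volume ({y : EuclideanSpace ℝ (Fin (k+2)) | t < f y} ∩ P)
      = (∫⁻ t in Ioc (0:ℝ) 1, volume ({y : EuclideanSpace ℝ (Fin (k+2)) | t < f y} ∩ P))
        + ∫⁻ t in Ioi (1:ℝ), volume ({y : EuclideanSpace ℝ (Fin (k+2)) | t < f y} ∩ P) := by
    rw [← Set.Ioc_union_Ioi_eq_Ioi (zero_le_one (α := ℝ)),
      lintegral_union measurableSet_Ioi Set.Ioc_disjoint_Ioi_same]
  -- piece 1
  have hp1 : ∫⁻ t in Ioc (0:ℝ) 1, volume ({y : EuclideanSpace ℝ (Fin (k+2)) | t < f y} ∩ P)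
      ≤ ENNReal.ofReal V₁ := by
    have hmono : ∫⁻ t in Ioc (0:ℝ) 1, volume ({y : EuclideanSpace ℝ (Fin (k+2)) | t < f y} ∩ P)
        ≤ ∫⁻ t in Ioc (0:ℝ) 1, ENNReal.ofReal (2^(k+2) * t ^ e₁) := by
      apply lintegral_mono_ae
      filter_upwards [ae_restrict_mem measurableSet_Ioc] with t ht
      exact hG1 t ht
    refine hmono.trans ?_
    have hint : IntegrableOn (fun t : ℝ => 2^(k+2) * t ^ e₁) (Ioc (0:ℝ) 1) :=
      ((intervalIntegral.intervalIntegrable_rpow' (a := (0:ℝ)) (b := 1) he₁1).1).const_mul _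
    have hnn : 0 ≤ᵐ[volume.restrict (Ioc (0:ℝ) 1)] fun t : ℝ => 2^(k+2) * t ^ e₁ := by
      filter_upwards [ae_restrict_mem measurableSet_Ioc] with t ht
      exact mul_nonneg (by positivity) (Real.rpow_nonneg ht.1.le _)
    rw [← ofReal_integral_eq_lintegral_ofReal hint hnn]
    apply ENNReal.ofReal_le_ofReal
    rw [integral_const_mul]
    have hval : ∫ t in Ioc (0:ℝ) 1, t ^ e₁ = 1/(e₁+1) := by
      rw [← intervalIntegral.integral_of_le zero_le_one, integral_rpow (Or.inl he₁1)]
      have h1 : e₁ + 1 ≠ 0 := by rw [he₁a]; positivity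
      rw [Real.one_rpow, Real.zero_rpow h1]
      norm_num
    rw [hval, he₁a, hV₁, one_div, inv_div]
  -- piece 2: reduction
  have hp2 : ∫⁻ t in Ioi (1:ℝ), volume ({y : EuclideanSpace ℝ (Fin (k+2)) | t < f y} ∩ P)
      ≤ ∫⁻ t in Ioc (1:ℝ) T, ENNReal.ofReal (2^(k+3) * t ^ e₂) := by
    calc ∫⁻ t in Ioi (1:ℝ), volume ({y : EuclideanSpace ℝ (Fin (k+2)) | t < f y} ∩ P)
        ≤ ∫⁻ t in Ioi (1:ℝ),
            (Set.Ioc (1:ℝ) T).indicator (fun t => ENNReal.ofReal (2^(k+3) * t ^ e₂)) t := by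
          apply lintegral_mono_ae
          filter_upwards [ae_restrict_mem measurableSet_Ioi] with t ht
          rcases le_or_gt t T with h | h
          · rw [Set.indicator_of_mem (Set.mem_Ioc.mpr ⟨ht, h⟩)
              (fun t => ENNReal.ofReal (2^(k+3) * t ^ e₂))]
            exact hG2 t ht
          · rw [hG3 t h.le]
            exact zero_le
      _ = ∫⁻ t in Ioc (1:ℝ) T, ENNReal.ofReal (2^(k+3) * t ^ e₂) := by
          rw [lintegral_indicator measurableSet_Ioc,
            Measure.restrict_restrict measurableSet_Ioc,
            Set.inter_eq_self_of_subset_left Set.Ioc_subset_Ioi_self]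
  have h0T : (0:ℝ) ∉ Set.uIcc (1:ℝ) T := by
    rw [Set.uIcc_of_le hT1.le]
    intro h
    exact absurd h.1 (by norm_num)
  have hii : IntervalIntegrable (fun t : ℝ => t ^ e₂) volume 1 T :=
    intervalIntegral.intervalIntegrable_rpow (Or.inr h0T)
  have hnn2 : 0 ≤ᵐ[volume.restrict (Ioc (1:ℝ) T)] fun t : ℝ => 2^(k+3) * t ^ e₂ := by
    filter_upwards [ae_restrict_mem measurableSet_Ioc] with t ht
    exact mul_nonneg (by positivity) (Real.rpow_nonneg (by linarith [ht.1]) _)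
  have hval2 : ∫⁻ t in Ioc (1:ℝ) T, ENNReal.ofReal (2^(k+3) * t ^ e₂)
      = ENNReal.ofReal (2^(k+3) * ∫ t in (1:ℝ)..T, t ^ e₂) := by
    rw [← ofReal_integral_eq_lintegral_ofReal (hii.1.const_mul _) hnn2]
    rw [integral_const_mul, intervalIntegral.integral_of_le hT1.le]
  have htotal : ∫⁻ y in P, ENNReal.ofReal (f y)
      ≤ ENNReal.ofReal V₁ + ENNReal.ofReal (2^(k+3) * ∫ t in (1:ℝ)..T, t ^ e₂) := by
    rw [hlayer, hsplit]
    exact add_le_add hp1 (hp2.trans (le_of_eq hval2))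
  clear hp1 hp2 hval2 hsplit hlayer hG1 hG2 hG3 hball hdist hnn2 hii
  have hB : (0:ℝ) < 2^(k+3) := pow_pos two_pos _
  refine ⟨?_, ?_, ?_⟩
  · -- case α < 1
    intro hα1
    have h1α : (1:ℝ) - α ≠ 0 := by intro h; linarith
    have hb : e₂ + 1 < 0 := by rw [he₂a]; apply div_neg_of_neg_of_pos (by linarith) hq0
    have hne : e₂ ≠ -1 := by intro h; rw [h] at hb; norm_num at hb
    have hJ : ∫ t in (1:ℝ)..T, t ^ e₂ = (T ^ (e₂+1) - 1)/(e₂+1) := by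
      rw [integral_rpow (Or.inr ⟨hne, h0T⟩), Real.one_rpow]
    have hA : (0:ℝ) ≤ T ^ (e₂+1) := Real.rpow_nonneg hT0.le _
    have hJle : ∫ t in (1:ℝ)..T, t ^ e₂ ≤ q / (1-α) := by
      rw [hJ, div_le_iff_of_neg hb]
      have h5 : q/(1-α) * (e₂+1) = -1 := by
        rw [he₂a]; field_simp; ring
      rw [h5]; linarith
    have hJnn : (0:ℝ) ≤ ∫ t in (1:ℝ)..T, t ^ e₂ := by
      rw [hJ]
      have h6 : T ^ (e₂+1) ≤ 1 := Real.rpow_le_one_of_one_le_of_nonpos hT1.le hb.le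
      rw [div_nonneg_iff]
      right
      constructor <;> linarith
    refine htotal.trans ?_
    calc ENNReal.ofReal V₁ + ENNReal.ofReal (2^(k+3) * ∫ t in (1:ℝ)..T, t ^ e₂)
        ≤ ENNReal.ofReal V₁ + ENNReal.ofReal (2^(k+3) * (q/(1-α))) :=
          add_le_add le_rfl (ENNReal.ofReal_le_ofReal
            (mul_le_mul_of_nonneg_left hJle hB.le))
      _ = ENNReal.ofReal (V₁ + 2^(k+3) * (q/(1-α))) := by
          rw [← ENNReal.ofReal_add hV₁pos.le
            (mul_nonneg hB.le (le_of_lt (div_pos hq0 (by linarith))))]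
      _ ≤ ENNReal.ofReal C := by
          apply ENNReal.ofReal_le_ofReal
          have h2 : |1 - α| = 1 - α := abs_of_pos (by linarith)
          have hkey : q/(1-α) ≤ q * (1 + 1/(1-α)) := by
            rw [div_eq_mul_one_div]
            nlinarith [hq0.le, div_pos one_pos (show (0:ℝ) < 1 - α by linarith)]
          calc V₁ + 2^(k+3) * (q/(1-α)) ≤ V₁ + 2^(k+3) * (q * (1 + 1/(1-α))) := by
                nlinarith [hB]
            _ = C := by rw [hC, h2]; ring
  · -- case α = 1
    intro hα1
    subst hα1
    have he₂m1 : e₂ = -1 := by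
      have h := he₂a
      norm_num at h
      linarith
    have hJ : ∫ t in (1:ℝ)..T, t ^ e₂ = Real.log T := by
      rw [show (∫ t in (1:ℝ)..T, t ^ e₂) = ∫ t in (1:ℝ)..T, t⁻¹ from
        intervalIntegral.integral_congr fun t _ => by rw [he₂m1, Real.rpow_neg_one]]
      rw [integral_inv h0T, div_one]
    have hlogT : Real.log T = q * |Real.log δ| := by
      rw [hT_def, Real.log_rpow hδ0]
      have hneg : Real.log δ < 0 := Real.log_neg hδ0 hδ1
      rw [abs_of_neg hneg]
      ring
    have hL : (0:ℝ) ≤ |Real.log δ| := abs_nonneg _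
    refine htotal.trans ?_
    rw [hJ, hlogT]
    rw [← ENNReal.ofReal_add hV₁pos.le
      (mul_nonneg hB.le (mul_nonneg hq0.le hL))]
    apply ENNReal.ofReal_le_ofReal
    rw [hC]
    have h2 : |1 - (1:ℝ)| = 0 := by norm_num
    rw [h2]
    simp only [div_zero]
    nlinarith [mul_pos hB hq0, mul_nonneg hV₁pos.le hL]
  · -- case 1 < α
    intro hα1
    have hα1ne : α - 1 ≠ 0 := by intro h; linarith
    have hb : (0:ℝ) < e₂ + 1 := by
      rw [he₂a]; exact div_pos (by linarith) hq0
    have hne : e₂ ≠ -1 := by intro h; rw [h] at hb; norm_num at hb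
    have hJ : ∫ t in (1:ℝ)..T, t ^ e₂ = (T ^ (e₂+1) - 1)/(e₂+1) := by
      rw [integral_rpow (Or.inr ⟨hne, h0T⟩), Real.one_rpow]
    have hTval : T ^ (e₂+1) = δ ^ (1-α) := by
      rw [hT_def, ← Real.rpow_mul hδ0.le, he₂a,
        show -q * ((α-1)/q) = 1-α from by field_simp; ring]
    have hD1 : (1:ℝ) ≤ δ ^ (1-α) :=
      Real.one_le_rpow_of_pos_of_le_one_of_nonpos hδ0 hδ1.le (by linarith)
    have hJle : ∫ t in (1:ℝ)..T, t ^ e₂ ≤ δ ^ (1-α) * (q/(α-1)) := by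
      rw [hJ, hTval]
      calc (δ ^ (1-α) - 1)/(e₂+1) ≤ (δ ^ (1-α))/(e₂+1) :=
            (div_le_div_iff_of_pos_right hb).mpr (by linarith)
        _ = δ ^ (1-α) * (q/(α-1)) := by
            rw [he₂a, div_div_eq_mul_div, mul_div_assoc]
    refine htotal.trans ?_
    calc ENNReal.ofReal V₁ + ENNReal.ofReal (2^(k+3) * ∫ t in (1:ℝ)..T, t ^ e₂)
        ≤ ENNReal.ofReal V₁ + ENNReal.ofReal (2^(k+3) * (δ ^ (1-α) * (q/(α-1)))) :=
          add_le_add le_rfl (ENNReal.ofReal_le_ofReal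
            (mul_le_mul_of_nonneg_left hJle hB.le))
      _ = ENNReal.ofReal (V₁ + 2^(k+3) * (δ ^ (1-α) * (q/(α-1)))) := by
          rw [← ENNReal.ofReal_add hV₁pos.le
            (mul_nonneg hB.le (mul_nonneg (by positivity)
              (le_of_lt (div_pos hq0 (by linarith)))))]
      _ ≤ ENNReal.ofReal (C * δ ^ (1-α)) := by
          apply ENNReal.ofReal_le_ofReal
          have h2 : |1 - α| = α - 1 := by rw [abs_of_neg (by linarith)]; ring
          have hexp : C * δ ^ (1-α) = V₁ * δ ^ (1-α) + 2^(k+3)*q*δ ^ (1-α)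
              + 2^(k+3) * (δ ^ (1-α) * (q/(α-1))) := by
            rw [hC, h2]
            field_simp
            ring
          rw [hexp]
          nlinarith [mul_nonneg hV₁pos.le (sub_nonneg.mpr hD1),
            mul_pos (mul_pos hB hq0) (lt_of_lt_of_le one_pos hD1)]
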